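/- arXiv:1703.03965 — 3 statements merged into one kernel-verified Lean document; each statement's English description precedes it below -/
import Mathlib

section
/- If p/α > 8 with α ∈ (0,1) and a = Φ^{-1}(1 − α/(2p)), then log(p/α) < a² < 2 log(2p/α). -/
open MeasureTheory Real Set Filter

noncomputable def stdNormalPDF (u : ℝ) : ℝ := Real.exp (-u ^ 2 / 2) / Real.sqrt (2 * Real.pi)

noncomputable def stdNormalCDF (u : ℝ) : ℝ := ∫ t in Set.Iic u, stdNormalPDF t

lemma pdf_eq (u : ℝ) : stdNormalPDF u = Real.exp (-(1/2) * u ^ 2) / Real.sqrt (2 * Real.pi) := by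
  unfold stdNormalPDF; ring_nf

lemma pdf_pos (u : ℝ) : 0 < stdNormalPDF u := by
  unfold stdNormalPDF
  positivity

lemma pdf_cont : Continuous stdNormalPDF := by
  unfold stdNormalPDF
  fun_prop

lemma pdf_integrable : Integrable stdNormalPDF := by
  have h := integrable_exp_neg_mul_sq (by norm_num : (0:ℝ) < 1/2)
  have := h.div_const (Real.sqrt (2 * Real.pi))
  convert this using 2 with u
  rw [pdf_eq]

lemma pdf_total : ∫ u, stdNormalPDF u = 1 := by
  simp only [pdf_eq]
  rw [integral_div, integral_gaussian]
  rw [div_eq_one_iff_eq (by positivity), show (π/(1/2):ℝ) = 2*π by ring]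

noncomputable def tailT (u : ℝ) : ℝ := ∫ t in Set.Ioi u, stdNormalPDF t

lemma cdf_add_tail (u : ℝ) : stdNormalCDF u + tailT u = 1 := by
  rw [stdNormalCDF, tailT, intervalIntegral.integral_Iic_add_Ioi pdf_integrable.integrableOn
    pdf_integrable.integrableOn, pdf_total]

lemma exp_sq_hasDeriv (t : ℝ) :
    HasDerivAt (fun x : ℝ => -Real.exp (-x ^ 2 / 2)) (t * Real.exp (-t ^ 2 / 2)) t := by
  have h1 : HasDerivAt (fun x : ℝ => -x ^ 2 / 2) (-t) t := by
    have := (hasDerivAt_pow 2 t).neg.div_const 2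
    refine this.congr_deriv ?_
    norm_num; ring
  have := (h1.exp).neg
  refine this.congr_deriv ?_
  ring

lemma exp_sq_tendsto : Tendsto (fun x : ℝ => -Real.exp (-x ^ 2 / 2)) atTop (nhds 0) := by
  rw [show (0:ℝ) = -0 by ring]
  apply Tendsto.neg
  apply Real.tendsto_exp_atBot.comp
  have h1 : Tendsto (fun x : ℝ => x ^ 2 / 2) atTop atTop :=
    (tendsto_pow_atTop two_ne_zero).atTop_div_const (by norm_num)
  have := Filter.tendsto_neg_atBot_iff.mpr h1
  convert this using 2 with x
  ring

lemma integral_t_exp (c : ℝ) (hc : 0 < c) :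
    ∫ t in Set.Ioi c, t * Real.exp (-t ^ 2 / 2) = Real.exp (-c ^ 2 / 2) := by
  have := integral_Ioi_of_hasDerivAt_of_nonneg (g := fun x : ℝ => -Real.exp (-x ^ 2 / 2))
    (g' := fun t => t * Real.exp (-t ^ 2 / 2)) (a := c) (l := 0)
    (exp_sq_hasDeriv c).continuousAt.continuousWithinAt
    (fun x hx => exp_sq_hasDeriv x)
    (fun x hx => by have : (0:ℝ) < x := hc.trans hx; positivity)
    exp_sq_tendsto
  simpa using this

lemma t_exp_integrableOn (c : ℝ) (hc : 0 < c) :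
    IntegrableOn (fun t => t * Real.exp (-t ^ 2 / 2)) (Set.Ioi c) := by
  exact integrableOn_Ioi_deriv_of_nonneg (exp_sq_hasDeriv c).continuousAt.continuousWithinAt
    (fun x hx => exp_sq_hasDeriv x)
    (fun x hx => by have : (0:ℝ) < x := hc.trans hx; positivity)
    exp_sq_tendsto

lemma tail_upper (c : ℝ) (hc : 0 < c) : tailT c ≤ stdNormalPDF c / c := by
  have hInt := t_exp_integrableOn c hc
  have step : tailT c ≤ ∫ t in Set.Ioi c, t * Real.exp (-t ^ 2 / 2) / (c * Real.sqrt (2 * Real.pi)) := by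
    apply setIntegral_mono_on pdf_integrable.integrableOn (hInt.div_const _)
      measurableSet_Ioi
    intro t ht
    have htc : c < t := ht
    have h0 : (0:ℝ) < Real.sqrt (2 * Real.pi) := by positivity
    rw [show stdNormalPDF t = c * Real.exp (-t ^ 2 / 2) / (c * Real.sqrt (2 * Real.pi)) by
      rw [stdNormalPDF]; field_simp]
    gcongr
  calc tailT c ≤ _ := step
    _ = stdNormalPDF c / c := by
        rw [MeasureTheory.integral_div, integral_t_exp c hc, stdNormalPDF]
        field_simp

lemma cdf_hasDeriv (x : ℝ) : HasDerivAt stdNormalCDF (stdNormalPDF x) x := by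
  have key : ∀ y, stdNormalCDF y = stdNormalCDF 0 + ∫ t in (0:ℝ)..y, stdNormalPDF t := by
    intro y
    rw [← intervalIntegral.integral_Iic_sub_Iic pdf_integrable.integrableOn
      pdf_integrable.integrableOn]
    unfold stdNormalCDF; ring
  have hd : HasDerivAt (fun y => ∫ t in (0:ℝ)..y, stdNormalPDF t) (stdNormalPDF x) x :=
    intervalIntegral.integral_hasDerivAt_right (pdf_integrable.intervalIntegrable)
      (pdf_cont.stronglyMeasurableAtFilter _ _) pdf_cont.continuousAt
  have : HasDerivAt (fun y => stdNormalCDF 0 + ∫ t in (0:ℝ)..y, stdNormalPDF t)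
      (stdNormalPDF x) x := hd.const_add _
  exact this.congr_deriv rfl |>.congr_of_eventuallyEq (Filter.Eventually.of_forall fun y => (key y))

noncomputable def gFun (t : ℝ) : ℝ := t / (1 + t ^ 2) * stdNormalPDF t

noncomputable def hFun (t : ℝ) : ℝ := tailT t - gFun t

lemma pdf_hasDeriv (x : ℝ) : HasDerivAt stdNormalPDF (-x * stdNormalPDF x) x := by
  have h1 : HasDerivAt (fun t : ℝ => -t ^ 2 / 2) (-x) x := by
    have := (hasDerivAt_pow 2 x).neg.div_const 2
    refine this.congr_deriv ?_
    norm_num; ring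
  have := (h1.exp).div_const (Real.sqrt (2 * Real.pi))
  refine this.congr_deriv ?_
  unfold stdNormalPDF
  ring

lemma gFun_hasDeriv (x : ℝ) :
    HasDerivAt gFun ((1 - x ^ 2) / (1 + x ^ 2) ^ 2 * stdNormalPDF x
      + x / (1 + x ^ 2) * (-x * stdNormalPDF x)) x := by
  have hne : (1 + x ^ 2) ≠ 0 := by positivity
  have h1 : HasDerivAt (fun t : ℝ => t / (1 + t ^ 2)) ((1 - x ^ 2) / (1 + x ^ 2) ^ 2) x := by
    have := (hasDerivAt_id x).div ((hasDerivAt_pow 2 x).const_add 1) hne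
    refine this.congr_deriv ?_
    field_simp
    simp only [id]; ring
  exact h1.mul (pdf_hasDeriv x)

lemma tailT_hasDeriv (x : ℝ) : HasDerivAt tailT (-stdNormalPDF x) x := by
  have : tailT = fun t => 1 - stdNormalCDF t := by
    funext t
    have := cdf_add_tail t
    linarith
  rw [this]
  simpa using (cdf_hasDeriv x).const_sub 1

lemma hFun_strictAnti : StrictAnti hFun := by
  apply strictAnti_of_hasDerivAt_neg
    (f' := fun x => -stdNormalPDF x - ((1 - x ^ 2) / (1 + x ^ 2) ^ 2 * stdNormalPDF x
      + x / (1 + x ^ 2) * (-x * stdNormalPDF x)))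
  · intro x
    exact (tailT_hasDeriv x).sub (gFun_hasDeriv x)
  · intro x
    have hne : (0:ℝ) < (1 + x ^ 2) := by positivity
    have hp := pdf_pos x
    have key : -stdNormalPDF x - ((1 - x ^ 2) / (1 + x ^ 2) ^ 2 * stdNormalPDF x
        + x / (1 + x ^ 2) * (-x * stdNormalPDF x)) = -(2 / (1 + x ^ 2) ^ 2) * stdNormalPDF x := by
      field_simp
      ring
    rw [key]
    have : (0:ℝ) < 2 / (1 + x ^ 2) ^ 2 := by positivity
    nlinarith

lemma pdf_tendsto : Tendsto stdNormalPDF atTop (nhds 0) := by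
  have h := exp_sq_tendsto.neg
  simp only [neg_neg] at h
  have h2 := h.div_const (Real.sqrt (2 * Real.pi))
  have : stdNormalPDF = fun x : ℝ => Real.exp (-x ^ 2 / 2) / Real.sqrt (2 * Real.pi) := rfl
  rw [this]
  simpa using h2

lemma tailT_nonneg (x : ℝ) : 0 ≤ tailT x :=
  setIntegral_nonneg measurableSet_Ioi fun t _ => (pdf_pos t).le

lemma tailT_tendsto : Tendsto tailT atTop (nhds 0) := by
  apply tendsto_of_tendsto_of_tendsto_of_le_of_le' tendsto_const_nhds pdf_tendsto
  · exact Filter.Eventually.of_forall tailT_nonneg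
  · filter_upwards [eventually_ge_atTop (1:ℝ)] with t ht
    calc tailT t ≤ stdNormalPDF t / t := tail_upper t (by linarith)
      _ ≤ stdNormalPDF t := by
          rw [div_le_iff₀ (by linarith)]
          nlinarith [pdf_pos t]

lemma gFun_tendsto : Tendsto gFun atTop (nhds 0) := by
  apply tendsto_of_tendsto_of_tendsto_of_le_of_le' tendsto_const_nhds pdf_tendsto
  · filter_upwards [eventually_ge_atTop (0:ℝ)] with t ht
    have : 0 ≤ t / (1 + t ^ 2) := by positivity
    exact mul_nonneg this (pdf_pos t).le
  · filter_upwards [eventually_ge_atTop (0:ℝ)] with t ht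
    have h1 : t / (1 + t ^ 2) ≤ 1 := by
      rw [div_le_one (by positivity)]
      nlinarith
    unfold gFun
    nlinarith [pdf_pos t]

lemma hFun_pos (x : ℝ) : 0 < hFun x := by
  have htend : Tendsto hFun atTop (nhds 0) := by
    have h := tailT_tendsto.sub gFun_tendsto
    rw [sub_zero] at h
    exact h
  have hge : 0 ≤ hFun (x + 1) := by
    apply le_of_tendsto htend
    filter_upwards [eventually_ge_atTop (x + 1)] with y hy
    exact (hFun_strictAnti.antitone hy)
  calc (0:ℝ) ≤ hFun (x + 1) := hge
    _ < hFun x := hFun_strictAnti (by linarith)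

lemma tail_lower (x : ℝ) : x / (1 + x ^ 2) * stdNormalPDF x < tailT x := by
  have := hFun_pos x
  unfold hFun gFun at this
  linarith

lemma sqrt_two_pi_lt : Real.sqrt (2 * Real.pi) < 2.5067 := by
  rw [show (2 * Real.pi) = Real.pi * 2 by ring]
  apply (Real.sqrt_lt' (by norm_num)).mpr
  nlinarith [Real.pi_lt_d6]

lemma sqrt_two_pi_gt : (2:ℝ) < Real.sqrt (2 * Real.pi) := by
  apply (Real.lt_sqrt (by norm_num)).mpr
  nlinarith [Real.pi_gt_d6]

lemma exp_val_ub : Real.exp 1.05125 < 2.8654 := by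
  have h1 : Real.exp 1.05125 = Real.exp 1 * Real.exp 0.05125 := by
    rw [← Real.exp_add]; norm_num
  have h2 : Real.exp 1 < 2.7182818286 := Real.exp_one_lt_d9
  have h3 : Real.exp 0.05125 < 1 / 0.94875 := by
    have h5 : (0.94875:ℝ) < Real.exp (-0.05125) := by
      have := Real.add_one_lt_exp (show (-0.05125 : ℝ) ≠ 0 by norm_num)
      linarith
    have h4 : Real.exp (-0.05125 : ℝ) * Real.exp (0.05125 : ℝ) = 1 := by
      rw [← Real.exp_add]; norm_num
    rw [lt_div_iff₀ (by norm_num)]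
    nlinarith [Real.exp_pos (0.05125 : ℝ)]
  nlinarith [Real.exp_pos (0.05125:ℝ), Real.exp_pos (1:ℝ)]

lemma exp_val_lb : (2.857:ℝ) < Real.exp 1.05125 := by
  have h1 : Real.exp 1.05125 = Real.exp 1 * Real.exp 0.05125 := by
    rw [← Real.exp_add]; norm_num
  have h2 : (2.7182818283:ℝ) < Real.exp 1 := Real.exp_one_gt_d9
  have h3 : (1.05125:ℝ) ≤ Real.exp 0.05125 := by
    have := Real.add_one_le_exp (0.05125 : ℝ)
    linarith
  nlinarith

lemma tail_at_145 : 1/16 < tailT 1.45 := by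
  have h := tail_lower 1.45
  have hφ : stdNormalPDF 1.45 = Real.exp (-(1.05125)) / Real.sqrt (2 * Real.pi) := by
    rw [stdNormalPDF]; norm_num
  have hs := sqrt_two_pi_lt
  have hs2 := sqrt_two_pi_gt
  have he := exp_val_ub
  have hinv : Real.exp (-(1.05125:ℝ)) = (Real.exp 1.05125)⁻¹ := Real.exp_neg _
  have hepos : (0:ℝ) < Real.exp 1.05125 := Real.exp_pos _
  have hlow : (1/2.8654 : ℝ) < Real.exp (-(1.05125:ℝ)) := by
    rw [hinv, ← one_div]
    exact one_div_lt_one_div_of_lt hepos he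
  have : (1/16 : ℝ) < 1.45 / (1 + 1.45 ^ 2) * stdNormalPDF 1.45 := by
    rw [hφ]
    rw [div_mul_div_comm]
    rw [lt_div_iff₀ (by positivity)]
    nlinarith
  linarith [h, this]

lemma poly_ineq {x : ℝ} (hx : 1.45 ≤ x) :
    Real.sqrt (2 * Real.pi) * (1 + x ^ 2) < 2 * x * Real.exp (x ^ 2 / 2) := by
  have htan : Real.exp 1.05125 * (1 + (x ^ 2 / 2 - 1.05125)) ≤ Real.exp (x ^ 2 / 2) := by
    have h1 := Real.add_one_le_exp (x ^ 2 / 2 - 1.05125)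
    have h2 : Real.exp 1.05125 * Real.exp (x ^ 2 / 2 - 1.05125) = Real.exp (x ^ 2 / 2) := by
      rw [← Real.exp_add]; ring_nf
    nlinarith [Real.exp_pos (1.05125:ℝ)]
  have he := exp_val_lb
  have hs := sqrt_two_pi_lt
  have hfac : (0:ℝ) < 1 + (x ^ 2 / 2 - 1.05125) := by nlinarith
  have hstep : (2.857:ℝ) * (x ^ 2 / 2 - 0.05125) ≤ Real.exp (x ^ 2 / 2) := by
    nlinarith
  nlinarith [sq_nonneg (x - 1.45), sq_nonneg x]

lemma tailT_strictAnti : StrictAnti tailT :=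
  strictAnti_of_hasDerivAt_neg tailT_hasDeriv fun x => neg_neg_iff_pos.mpr (pdf_pos x)

theorem inv_cdf_square_bounds (p α a : ℝ) (hα : α ∈ Set.Ioo (0 : ℝ) 1)
    (hpα : 8 < p / α) (ha : stdNormalCDF a = 1 - α / (2 * p)) :
    Real.log (p / α) < a ^ 2 ∧ a ^ 2 < 2 * Real.log (2 * p / α) := by
  obtain ⟨hα0, hα1⟩ := hα
  have hp : 0 < p := by
    have h1 : (0:ℝ) < p / α := by linarith
    have h2 := mul_pos h1 hα0
    rwa [div_mul_cancel₀ p (ne_of_gt hα0)] at h2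
  set ε := α / (2 * p) with hε
  have hε0 : 0 < ε := by positivity
  have h8 : 8 * α < p := by
    rw [lt_div_iff₀ hα0] at hpα
    linarith
  have hε16 : ε < 1 / 16 := by
    rw [hε, div_lt_div_iff₀ (by positivity) (by norm_num)]
    linarith
  have htail : tailT a = ε := by
    have := cdf_add_tail a
    rw [ha] at this
    linarith
  have ha145 : 1.45 < a := by
    by_contra hcon
    push_neg at hcon
    have h1 : tailT 1.45 ≤ tailT a := tailT_strictAnti.antitone hcon
    have h2 := tail_at_145
    rw [htail] at h1
    linarith
  have ha0 : 0 < a := by linarith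
  have hspos : (0:ℝ) < Real.sqrt (2 * Real.pi) := by positivity
  -- upper bound on ε
  have hup : ε < Real.exp (-a ^ 2 / 2) := by
    have h1 : tailT a ≤ stdNormalPDF a / a := tail_upper a ha0
    have h2 : stdNormalPDF a / a < Real.exp (-a ^ 2 / 2) := by
      rw [stdNormalPDF, div_div]
      apply div_lt_self (Real.exp_pos _)
      nlinarith [sqrt_two_pi_gt]
    rw [← htail]
    linarith
  -- lower bound on 2ε
  have hlo : Real.exp (-a ^ 2) < 2 * ε := by
    have h1 := tail_lower a
    have h2 := poly_ineq (le_of_lt ha145)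
    have hExp : Real.exp (a ^ 2 / 2) * Real.exp (-a ^ 2 / 2) = 1 := by
      rw [← Real.exp_add]; ring_nf; exact Real.exp_zero
    have hEsq : Real.exp (-a ^ 2) = Real.exp (-a ^ 2 / 2) ^ 2 := by
      rw [← Real.exp_nat_mul]
      congr 1
      push_cast
      ring
    have hE2 : (0:ℝ) < Real.exp (-a ^ 2 / 2) ^ 2 := pow_pos (Real.exp_pos _) 2
    have h3 := mul_lt_mul_of_pos_right h2 hE2
    have h4 : Real.exp (a ^ 2 / 2) * Real.exp (-a ^ 2 / 2) ^ 2 = Real.exp (-a ^ 2 / 2) := by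
      linear_combination Real.exp (-a ^ 2 / 2) * hExp
    have h5 : 2 * a * Real.exp (a ^ 2 / 2) * Real.exp (-a ^ 2 / 2) ^ 2
        = 2 * a * Real.exp (-a ^ 2 / 2) := by
      linear_combination (2 * a) * h4
    have hgt : Real.exp (-a ^ 2 / 2) ^ 2 * ((1 + a ^ 2) * Real.sqrt (2 * Real.pi))
        < 2 * (a * Real.exp (-a ^ 2 / 2)) := by nlinarith [h3, h5]
    have key : Real.exp (-a ^ 2) < 2 * (a / (1 + a ^ 2) * stdNormalPDF a) := by
      rw [stdNormalPDF, hEsq]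
      calc Real.exp (-a ^ 2 / 2) ^ 2
          < 2 * (a * Real.exp (-a ^ 2 / 2)) / ((1 + a ^ 2) * Real.sqrt (2 * Real.pi)) := by
            rw [lt_div_iff₀ (by positivity)]; exact hgt
        _ = 2 * (a / (1 + a ^ 2) * (Real.exp (-a ^ 2 / 2) / Real.sqrt (2 * Real.pi))) := by
            field_simp
    rw [← htail]
    linarith
  constructor
  · -- log (p/α) < a²
    have h2ε : 2 * ε = α / p := by
      rw [hε]; field_simp
    rw [h2ε] at hlo
    have hlog : -a ^ 2 < Real.log (α / p) := by
      have := Real.log_lt_log (Real.exp_pos _) hlo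
      rwa [Real.log_exp] at this
    have : Real.log (p / α) = -Real.log (α / p) := by
      rw [← Real.log_inv]
      congr 1
      field_simp
    rw [this]
    linarith
  · -- a² < 2 log (2p/α)
    have hlog : Real.log ε < -a ^ 2 / 2 := by
      have := Real.log_lt_log hε0 hup
      rwa [Real.log_exp] at this
    have : Real.log (2 * p / α) = -Real.log ε := by
      rw [← Real.log_inv]
      congr 1
      rw [hε]
      field_simp
    rw [this]
    linarith
end

section
/- Let f: ℝᵖ → ℝ be convex and differentiable, λ > 0, c > 1, and β*, β̂ ∈ ℝᵖ. Let T ⊆ {1,…,p} contain the support of β*. If β̂ minimizes f(β) + λ‖β‖₁ and λ ≥ c‖∇f(β*)‖_∞, then the error δ = β̂ − β* satisfies ‖δ_{T^c}‖₁ ≤ ((c+1)/(c−1))·‖δ_T‖₁. -/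
open Finset

theorem cone_condition {p : ℕ} (hp : 0 < p)
    (f : EuclideanSpace ℝ (Fin p) → ℝ) (g βstar βhat : EuclideanSpace ℝ (Fin p))
    (hconv : ConvexOn ℝ Set.univ f) (hgrad : HasGradientAt f g βstar)
    (lam c : ℝ) (hlam : 0 < lam) (hc : 1 < c)
    (T : Finset (Fin p)) (hsupp : ∀ j ∉ T, βstar j = 0)
    (hmin : ∀ β : EuclideanSpace ℝ (Fin p),
      f βhat + lam * ∑ j, |βhat j| ≤ f β + lam * ∑ j, |β j|)
    (hlam_ge : ∀ j, c * |g j| ≤ lam) :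
    ∑ j ∈ Tᶜ, |βhat j - βstar j| ≤ (c + 1) / (c - 1) * ∑ j ∈ T, |βhat j - βstar j| := by
  set δ : EuclideanSpace ℝ (Fin p) := βhat - βstar with hδ
  have hδj : ∀ j, δ j = βhat j - βstar j := fun j => rfl
  set A := ∑ j ∈ T, |βhat j - βstar j| with hA
  set B := ∑ j ∈ Tᶜ, |βhat j - βstar j| with hB
  have hA0 : 0 ≤ A := Finset.sum_nonneg fun j _ => abs_nonneg _
  have hB0 : 0 ≤ B := Finset.sum_nonneg fun j _ => abs_nonneg _
  -- Step 1: f βhat - f βstar ≤ lam * (A - B)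
  have step1 : f βhat - f βstar ≤ lam * (A - B) := by
    have h1 := hmin βstar
    have h2 : ∑ j, |βstar j| - ∑ j, |βhat j| ≤ A - B := by
      rw [← Finset.sum_add_sum_compl T (fun j => |βstar j|),
          ← Finset.sum_add_sum_compl T (fun j => |βhat j|)]
      have hTc : ∑ j ∈ Tᶜ, |βstar j| = 0 := by
        apply Finset.sum_eq_zero
        intro j hj
        rw [hsupp j (Finset.mem_compl.mp hj), abs_zero]
      have hTc2 : ∑ j ∈ Tᶜ, |βhat j| = B := by
        apply Finset.sum_congr rfl
        intro j hj
        rw [hsupp j (Finset.mem_compl.mp hj), sub_zero]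
      have hT : ∑ j ∈ T, |βstar j| - ∑ j ∈ T, |βhat j| ≤ A := by
        rw [← Finset.sum_sub_distrib]
        apply Finset.sum_le_sum
        intro j _
        calc |βstar j| - |βhat j| ≤ |βstar j - βhat j| := abs_sub_abs_le_abs_sub _ _
          _ = |βhat j - βstar j| := abs_sub_comm _ _
      rw [hTc, hTc2]
      linarith
    nlinarith
  -- Step 2: convexity gradient inequality
  have step2 : ∑ j, g j * (βhat j - βstar j) ≤ f βhat - f βstar := by
    set φ : ℝ → ℝ := fun t => f (βstar + t • δ) with hφ
    have hconvφ : ConvexOn ℝ Set.univ φ := by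
      have := hconv.comp_affineMap (AffineMap.lineMap βstar βhat)
      have heq : φ = f ∘ (AffineMap.lineMap βstar βhat) := by
        funext t
        simp [hφ, AffineMap.lineMap_apply, hδ]
        congr 1
        module
      rw [heq]
      simpa using this
    have hderiv : HasDerivAt φ (∑ j, g j * (βhat j - βstar j)) 0 := by
      have hc : HasDerivAt (fun t : ℝ => βstar + t • δ) δ 0 := by
        simpa using ((hasDerivAt_id (0:ℝ)).smul_const δ).const_add βstar
      have hx : βstar + (0:ℝ) • δ = βstar := by simp
      have hfd := hgrad.hasFDerivAt
      rw [← hx] at hfd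
      have hcomp := hfd.comp_hasDerivAt (0:ℝ) hc
      have hval : (InnerProductSpace.toDual ℝ (EuclideanSpace ℝ (Fin p))) g δ
          = ∑ j, g j * (βhat j - βstar j) := by
        rw [InnerProductSpace.toDual_apply_apply]
        rw [PiLp.inner_apply]
        simp [hδj, RCLike.inner_apply, mul_comm]
      rw [← hval]
      exact hcomp
    have := hconvφ.le_slope_of_hasDerivAt (Set.mem_univ (0:ℝ)) (Set.mem_univ (1:ℝ))
      one_pos hderiv
    have hφ1 : φ 1 = f βhat := by simp [hφ, hδ]
    have hφ0 : φ 0 = f βstar := by simp [hφ]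
    rw [slope_def_field, hφ1, hφ0] at this
    simpa using this
  -- Step 3: lower bound on inner product
  have step3 : -(lam / c) * (A + B) ≤ ∑ j, g j * (βhat j - βstar j) := by
    have hcpos : (0:ℝ) < c := lt_trans one_pos hc
    have : ∀ j, -(lam / c) * |βhat j - βstar j| ≤ g j * (βhat j - βstar j) := by
      intro j
      have h1 : |g j * (βhat j - βstar j)| ≤ (lam / c) * |βhat j - βstar j| := by
        rw [abs_mul]
        apply mul_le_mul_of_nonneg_right _ (abs_nonneg _)
        rw [le_div_iff₀ hcpos, mul_comm]
        exact hlam_ge j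
      nlinarith [neg_abs_le (g j * (βhat j - βstar j))]
    calc -(lam / c) * (A + B) = ∑ j, -(lam / c) * |βhat j - βstar j| := by
          rw [← Finset.mul_sum, hA, hB, Finset.sum_add_sum_compl]
        _ ≤ _ := Finset.sum_le_sum fun j _ => this j
  have hcpos : (0:ℝ) < c := lt_trans one_pos hc
  have key : -(lam / c) * (A + B) ≤ lam * (A - B) := le_trans step3 (le_trans step2 step1)
  have key2 : -(lam*(A+B)) ≤ c*(lam*(A-B)) := by
    have h := mul_le_mul_of_nonneg_left key hcpos.le
    calc -(lam*(A+B)) = c * (-(lam / c) * (A + B)) := by field_simp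
      _ ≤ _ := h
  rw [div_mul_eq_mul_div, le_div_iff₀ (by linarith : (0:ℝ) < c - 1)]
  nlinarith [key2, hlam, hA0, hB0]
end

section
/- Let x₁,…,xₙ ∈ ℝᵖ with sup_{i,j} |x_{ij}| ≤ R, let y₁,…,yₙ ≥ 0, and define f̃(t) = (1/n)Σᵢ (yᵢ e^{−xᵢ^T(β+tv)/2} + e^{xᵢ^T(β+tv)/2}) for fixed β, v ∈ ℝᵖ. Then for all t ∈ ℝ, |f̃'''(t)| ≤ (R/2)·‖v‖₁·f̃''(t). -/
noncomputable def Gfun (n : ℕ) (a b y : Fin n → ℝ) (k : ℕ) (s : ℝ) : ℝ :=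
  (1 / (n : ℝ)) * ∑ i, ((-(b i) / 2) ^ k * (y i * Real.exp (-(a i + s * b i) / 2)) +
    ((b i) / 2) ^ k * Real.exp ((a i + s * b i) / 2))

lemma Gfun_hasDerivAt (n : ℕ) (a b y : Fin n → ℝ) (k : ℕ) (s : ℝ) :
    HasDerivAt (Gfun n a b y k) (Gfun n a b y (k + 1) s) s := by
  unfold Gfun
  apply HasDerivAt.const_mul
  apply HasDerivAt.fun_sum
  intro i _
  have hlin : HasDerivAt (fun s : ℝ => a i + s * b i) (b i) s := by
    simpa using ((hasDerivAt_id s).mul_const (b i)).const_add (a i)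
  have hE1 : HasDerivAt (fun s : ℝ => Real.exp (-(a i + s * b i) / 2))
      (Real.exp (-(a i + s * b i) / 2) * (-(b i) / 2)) s := by
    simpa [neg_div] using (hlin.neg.div_const 2).exp
  have hE2 : HasDerivAt (fun s : ℝ => Real.exp ((a i + s * b i) / 2))
      (Real.exp ((a i + s * b i) / 2) * (b i / 2)) s := (hlin.div_const 2).exp
  have := ((hE1.const_mul (y i)).const_mul ((-(b i) / 2) ^ k)).fun_add
    (hE2.const_mul (((b i) / 2) ^ k))
  convert this using 1
  ring

theorem self_concordance_type_bound {n p : ℕ} (hn : 0 < n) (R : ℝ) (hR : 0 < R)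
    (x : Fin n → Fin p → ℝ) (hx : ∀ i j, |x i j| ≤ R)
    (y : Fin n → ℝ) (hy : ∀ i, 0 ≤ y i) (β v : Fin p → ℝ) (t : ℝ) :
    |iteratedDeriv 3
        (fun s : ℝ =>
          (1 / (n : ℝ)) * ∑ i, (y i * Real.exp (-(∑ j, x i j * (β j + s * v j)) / 2) +
            Real.exp ((∑ j, x i j * (β j + s * v j)) / 2))) t| ≤
      (R / 2) * (∑ j, |v j|) *
        iteratedDeriv 2
          (fun s : ℝ =>
            (1 / (n : ℝ)) * ∑ i, (y i * Real.exp (-(∑ j, x i j * (β j + s * v j)) / 2) +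
              Real.exp ((∑ j, x i j * (β j + s * v j)) / 2))) t := by
  set a : Fin n → ℝ := fun i => ∑ j, x i j * β j with ha
  set b : Fin n → ℝ := fun i => ∑ j, x i j * v j with hb
  have hsum : ∀ (i : Fin n) (s : ℝ), (∑ j, x i j * (β j + s * v j)) = a i + s * b i := by
    intro i s
    rw [ha, hb]
    simp only [Finset.mul_sum]
    rw [← Finset.sum_add_distrib]
    apply Finset.sum_congr rfl
    intro j _
    ring
  have hfun : (fun s : ℝ =>
      (1 / (n : ℝ)) * ∑ i, (y i * Real.exp (-(∑ j, x i j * (β j + s * v j)) / 2) +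
        Real.exp ((∑ j, x i j * (β j + s * v j)) / 2))) = Gfun n a b y 0 := by
    funext s
    unfold Gfun
    simp only [pow_zero, one_mul, hsum]
  have hd : ∀ k, deriv (Gfun n a b y k) = Gfun n a b y (k + 1) :=
    fun k => funext fun s => (Gfun_hasDerivAt n a b y k s).deriv
  have h2 : iteratedDeriv 2 (Gfun n a b y 0) = Gfun n a b y 2 := by
    rw [iteratedDeriv_succ, iteratedDeriv_one, hd, hd]
  have h3 : iteratedDeriv 3 (Gfun n a b y 0) = Gfun n a b y 3 := by
    rw [iteratedDeriv_succ, h2, hd]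
  rw [hfun, h2, h3]
  -- now prove |Gfun n a b y 3 t| ≤ (R/2) * S * Gfun n a b y 2 t
  set S : ℝ := ∑ j, |v j| with hS
  have hbS : ∀ i, |b i| ≤ R * S := by
    intro i
    calc |b i| ≤ ∑ j, |x i j * v j| := Finset.abs_sum_le_sum_abs _ _
      _ ≤ ∑ j, R * |v j| := by
          apply Finset.sum_le_sum
          intro j _
          rw [abs_mul]
          exact mul_le_mul_of_nonneg_right (hx i j) (abs_nonneg _)
      _ = R * S := by rw [hS, Finset.mul_sum]
  have key : ∀ i, |(-(b i) / 2) ^ 3 * (y i * Real.exp (-(a i + t * b i) / 2)) +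
      ((b i) / 2) ^ 3 * Real.exp ((a i + t * b i) / 2)| ≤
      (R / 2 * S) * ((-(b i) / 2) ^ 2 * (y i * Real.exp (-(a i + t * b i) / 2)) +
        ((b i) / 2) ^ 2 * Real.exp ((a i + t * b i) / 2)) := by
    intro i
    set E1 : ℝ := Real.exp (-(a i + t * b i) / 2)
    set E2 : ℝ := Real.exp ((a i + t * b i) / 2)
    have hE1 : 0 ≤ E1 := (Real.exp_pos _).le
    have hE2 : 0 ≤ E2 := (Real.exp_pos _).le
    have habs : |(-(b i) / 2) ^ 3 * (y i * E1) + ((b i) / 2) ^ 3 * E2| ≤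
        (|b i| / 2) * ((b i / 2) ^ 2 * (y i * E1) + (b i / 2) ^ 2 * E2) := by
      calc |(-(b i) / 2) ^ 3 * (y i * E1) + ((b i) / 2) ^ 3 * E2|
          ≤ |(-(b i) / 2) ^ 3 * (y i * E1)| + |((b i) / 2) ^ 3 * E2| := abs_add_le _ _
        _ = (|b i| / 2) ^ 3 * (y i * E1) + (|b i| / 2) ^ 3 * E2 := by
            simp only [abs_mul, abs_pow, abs_div, abs_neg, abs_two]
            rw [abs_of_nonneg (hy i), abs_of_nonneg hE1, abs_of_nonneg hE2]
        _ = (|b i| / 2) * ((|b i| / 2) ^ 2 * (y i * E1) + (|b i| / 2) ^ 2 * E2) := by ring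
        _ = (|b i| / 2) * ((b i / 2) ^ 2 * (y i * E1) + (b i / 2) ^ 2 * E2) := by
            rw [div_pow, div_pow, sq_abs]
    have hpos : 0 ≤ (b i / 2) ^ 2 * (y i * E1) + (b i / 2) ^ 2 * E2 :=
      add_nonneg (mul_nonneg (sq_nonneg _) (mul_nonneg (hy i) hE1))
        (mul_nonneg (sq_nonneg _) hE2)
    have hco : |b i| / 2 ≤ R / 2 * S := by
      have := hbS i; linarith
    calc |(-(b i) / 2) ^ 3 * (y i * E1) + ((b i) / 2) ^ 3 * E2|
        ≤ (|b i| / 2) * ((b i / 2) ^ 2 * (y i * E1) + (b i / 2) ^ 2 * E2) := habs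
      _ ≤ (R / 2 * S) * ((b i / 2) ^ 2 * (y i * E1) + (b i / 2) ^ 2 * E2) :=
          mul_le_mul_of_nonneg_right hco hpos
      _ = (R / 2 * S) * ((-(b i) / 2) ^ 2 * (y i * E1) + ((b i) / 2) ^ 2 * E2) := by
          ring_nf
  unfold Gfun
  have hn' : (0 : ℝ) < (n : ℝ) := by exact_mod_cast hn
  rw [abs_mul, abs_of_nonneg (by positivity : (0:ℝ) ≤ 1 / (n : ℝ))]
  calc (1 / (n : ℝ)) * |∑ i, ((-(b i) / 2) ^ 3 * (y i * Real.exp (-(a i + t * b i) / 2)) +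
        ((b i) / 2) ^ 3 * Real.exp ((a i + t * b i) / 2))|
      ≤ (1 / (n : ℝ)) * ∑ i, |(-(b i) / 2) ^ 3 * (y i * Real.exp (-(a i + t * b i) / 2)) +
        ((b i) / 2) ^ 3 * Real.exp ((a i + t * b i) / 2)| := by
        apply mul_le_mul_of_nonneg_left (Finset.abs_sum_le_sum_abs _ _) (by positivity)
    _ ≤ (1 / (n : ℝ)) * ∑ i, (R / 2 * S) * ((-(b i) / 2) ^ 2 *
        (y i * Real.exp (-(a i + t * b i) / 2)) +
        ((b i) / 2) ^ 2 * Real.exp ((a i + t * b i) / 2)) := by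
        apply mul_le_mul_of_nonneg_left (Finset.sum_le_sum fun i _ => key i) (by positivity)
    _ = R / 2 * S * ((1 / (n : ℝ)) * ∑ i, ((-(b i) / 2) ^ 2 *
        (y i * Real.exp (-(a i + t * b i) / 2)) +
        ((b i) / 2) ^ 2 * Real.exp ((a i + t * b i) / 2))) := by
        rw [← Finset.mul_sum]; ring
end
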